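/- Let 0 ≤ δ ≤ 1/(2√(t−1)) and p = 1/2 + δ, where t ≥ 4 is an odd integer. Then the probability that a Binomial(t, p) random variable exceeds t/2, namely ∑_{ℓ=(t+1)/2}^{t} C(t,ℓ) p^ℓ (1−p)^{t−ℓ}, satisfies 1/2 + (1/3)√t·δ ≤ ∑_{ℓ=(t+1)/2}^{t} C(t,ℓ) p^ℓ (1−p)^{t−ℓ} ≤ 1/2 + √t·δ. -/

import Mathlib

set_option maxHeartbeats 1000000

open Finset


lemma cb_rec_sq (k : ℕ) : ((k:ℝ)+1)^2 * (Nat.centralBinom (k+1) : ℝ)^2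
    = 4*(2*(k:ℝ)+1)^2 * (Nat.centralBinom k : ℝ)^2 := by
  have hrec : ((k:ℝ)+1) * (Nat.centralBinom (k+1) : ℝ) = 2*(2*(k:ℝ)+1) * Nat.centralBinom k := by
    exact_mod_cast congrArg (Nat.cast : ℕ → ℝ) (Nat.succ_mul_centralBinom_succ k)
  linear_combination (((k:ℝ)+1) * (Nat.centralBinom (k+1) : ℝ) + 2*(2*(k:ℝ)+1) * Nat.centralBinom k) * hrec

lemma cb_upper (k : ℕ) : (3*(k:ℝ)+1) * (Nat.centralBinom k : ℝ)^2 ≤ 16^k := by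
  induction k with
  | zero => simp [Nat.centralBinom]
  | succ k ih =>
    have hsq := cb_rec_sq k
    have hC := sq_nonneg (Nat.centralBinom k : ℝ)
    have key : ((k:ℝ)+1)^2 * ((3*((k:ℝ)+1)+1) * (Nat.centralBinom (k+1) : ℝ)^2)
        ≤ ((k:ℝ)+1)^2 * 16^(k+1) := by
      have h1 : ((k:ℝ)+1)^2 * ((3*((k:ℝ)+1)+1) * (Nat.centralBinom (k+1) : ℝ)^2)
          = (3*(k:ℝ)+4) * (4*(2*(k:ℝ)+1)^2 * (Nat.centralBinom k : ℝ)^2) := by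
        nlinarith [hsq]
      rw [h1]
      have h2 : (3*(k:ℝ)+4) * (4*(2*(k:ℝ)+1)^2) ≤ 16*(3*(k:ℝ)+1)*((k:ℝ)+1)^2 := by nlinarith [Nat.cast_nonneg (α := ℝ) k]
      have h3 := mul_le_mul_of_nonneg_right h2 hC
      have h4 := mul_le_mul_of_nonneg_left ih (by positivity : (0:ℝ) ≤ 16*((k:ℝ)+1)^2)
      nlinarith [h3, h4, pow_succ (16:ℝ) k]
    have := le_of_mul_le_mul_left key (by positivity : (0:ℝ) < ((k:ℝ)+1)^2)
    push_cast
    exact this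

lemma cb_lower (k : ℕ) (hk : 1 ≤ k) : (16:ℝ)^k ≤ 4*(k:ℝ) * (Nat.centralBinom k : ℝ)^2 := by
  induction k with
  | zero => omega
  | succ k ih =>
    rcases Nat.eq_zero_or_pos k with h|h
    · subst h; norm_num [Nat.centralBinom]
    · have ih' := ih h
      have hsq := cb_rec_sq k
      have hC := sq_nonneg (Nat.centralBinom k : ℝ)
      have hk0 : (1:ℝ) ≤ (k:ℝ) := by exact_mod_cast h
      have key : ((k:ℝ)+1) * 16^(k+1) ≤ ((k:ℝ)+1) * (4*((k:ℝ)+1) * (Nat.centralBinom (k+1) : ℝ)^2) := by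
        have h1 : ((k:ℝ)+1) * (4*((k:ℝ)+1) * (Nat.centralBinom (k+1) : ℝ)^2)
            = 4*(4*(2*(k:ℝ)+1)^2 * (Nat.centralBinom k : ℝ)^2) := by nlinarith [hsq]
        rw [h1]
        have h4 := mul_le_mul_of_nonneg_left ih' (by positivity : (0:ℝ) ≤ 16*((k:ℝ)+1))
        nlinarith [h4, pow_succ (16:ℝ) k, hC, hk0, sq_nonneg ((k:ℝ)-1)]
      have := le_of_mul_le_mul_left key (by positivity : (0:ℝ) < (k:ℝ)+1)
      push_cast
      exact this


lemma choose_mul_right (k j : ℕ) :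
    (2*k+1 - j) * Nat.choose (2*k+1) j = (2*k+1) * Nat.choose (2*k) j := by
  rcases le_or_gt j (2*k) with hj | hj
  · have h := Nat.add_one_mul_choose_eq (2*k) (2*k - j)
    have h1 : Nat.choose (2*k) (2*k - j) = Nat.choose (2*k) j := Nat.choose_symm hj
    have h2 : 2*k - j + 1 = 2*k+1 - j := by omega
    have h3 : Nat.choose (2*k+1) (2*k+1-j) = Nat.choose (2*k+1) j := Nat.choose_symm (by omega)
    rw [h1, h2, h3] at h
    rw [mul_comm]; exact h.symm
  · have h1 : Nat.choose (2*k) j = 0 := Nat.choose_eq_zero_of_lt hj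
    rcases (by omega : 2*k+1-j = 0 ∨ j = 2*k+1) with h2 | h2
    · rw [h1, h2]; ring
    · rw [h1, h2]; simp
lemma choose_mul_left (k i : ℕ) :
    (k+1+i) * Nat.choose (2*k+1) (k+1+i) = (2*k+1) * Nat.choose (2*k) (k+i) := by
  have h := Nat.add_one_mul_choose_eq (2*k) (k+i)
  rw [show k+i+1 = k+1+i by omega] at h
  rw [mul_comm]; exact h.symm

lemma sum_deriv (k : ℕ) (x : ℝ) :
    ∑ ℓ ∈ Icc (k+1) (2*k+1), (Nat.choose (2*k+1) ℓ : ℝ) *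
      ((ℓ:ℝ)*x^(ℓ-1)*(1-x)^(2*k+1-ℓ) - ((2*k+1-ℓ : ℕ):ℝ)*x^ℓ*(1-x)^(2*k-ℓ))
    = (2*(k:ℝ)+1) * (Nat.choose (2*k) k : ℝ) * (x^k*(1-x)^k) := by
  set c : ℕ → ℝ := fun i => (2*(k:ℝ)+1) * (Nat.choose (2*k) (k+i) : ℝ) * (x^(k+i) * (1-x)^(k-i)) with hc
  have step : ∀ i < k+1, (Nat.choose (2*k+1) (k+1+i) : ℝ) *
      (((k+1+i : ℕ):ℝ)*x^(k+1+i-1)*(1-x)^(2*k+1-(k+1+i)) - ((2*k+1-(k+1+i) : ℕ):ℝ)*x^(k+1+i)*(1-x)^(2*k-(k+1+i)))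
      = c i - c (i+1) := by
    intro i hi
    have p1 : k+1+i-1 = k+i := by omega
    have p2 : 2*k+1-(k+1+i) = k-i := by omega
    have p3 : 2*k-(k+1+i) = k-(i+1) := by omega
    have p4 : k+(i+1) = k+1+i := by omega
    have e1 : ((k+1+i : ℕ):ℝ) * (Nat.choose (2*k+1) (k+1+i) : ℝ)
        = (2*(k:ℝ)+1) * (Nat.choose (2*k) (k+i) : ℝ) := by
      exact_mod_cast congrArg (Nat.cast : ℕ → ℝ) (choose_mul_left k i)
    have e2 : ((k-i : ℕ):ℝ) * (Nat.choose (2*k+1) (k+1+i) : ℝ)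
        = (2*(k:ℝ)+1) * (Nat.choose (2*k) (k+1+i) : ℝ) := by
      have h := choose_mul_right k (k+1+i)
      rw [p2] at h
      exact_mod_cast congrArg (Nat.cast : ℕ → ℝ) h
    rw [hc]
    simp only [p1, p2, p3, p4]
    rw [mul_sub]
    congr 1
    · rw [← e1]; ring
    · rw [← e2]; ring
  have hIcc : Finset.Icc (k+1) (2*k+1) = Finset.Ico (k+1) (2*k+2) := by
    exact (Finset.Ico_add_one_right_eq_Icc (k+1) (2*k+1)).symm
  rw [hIcc, Finset.sum_Ico_eq_sum_range]
  have hn : 2*k+2-(k+1) = k+1 := by omega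
  rw [hn]
  calc ∑ i ∈ range (k+1), (Nat.choose (2*k+1) (k+1+i) : ℝ) *
      (((k+1+i : ℕ):ℝ)*x^(k+1+i-1)*(1-x)^(2*k+1-(k+1+i)) - ((2*k+1-(k+1+i) : ℕ):ℝ)*x^(k+1+i)*(1-x)^(2*k-(k+1+i)))
      = ∑ i ∈ range (k+1), (c i - c (i+1)) :=
        Finset.sum_congr rfl (fun i hi => step i (mem_range.mp hi))
    _ = c 0 - c (k+1) := Finset.sum_range_sub' c (k+1)
    _ = (2*(k:ℝ)+1) * (Nat.choose (2*k) k : ℝ) * (x^k*(1-x)^k) := by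
        have hz : Nat.choose (2*k) (k+(k+1)) = 0 := Nat.choose_eq_zero_of_lt (by omega)
        simp [hc, hz]

lemma G_hasDeriv (k : ℕ) (x : ℝ) :
    HasDerivAt (fun y : ℝ => ∑ ℓ ∈ Icc (k+1) (2*k+1),
        (Nat.choose (2*k+1) ℓ : ℝ) * y^ℓ * (1-y)^(2*k+1-ℓ))
      ((2*(k:ℝ)+1) * (Nat.choose (2*k) k : ℝ) * (x^k*(1-x)^k)) x := by
  have hterm : ∀ ℓ ∈ Icc (k+1) (2*k+1),
      HasDerivAt (fun y : ℝ => (Nat.choose (2*k+1) ℓ : ℝ) * y^ℓ * (1-y)^(2*k+1-ℓ))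
        ((Nat.choose (2*k+1) ℓ : ℝ) *
          ((ℓ:ℝ)*x^(ℓ-1)*(1-x)^(2*k+1-ℓ) - ((2*k+1-ℓ : ℕ):ℝ)*x^ℓ*(1-x)^(2*k-ℓ))) x := by
    intro ℓ _
    have h1 : HasDerivAt (fun y : ℝ => (Nat.choose (2*k+1) ℓ : ℝ) * y^ℓ)
        ((Nat.choose (2*k+1) ℓ : ℝ) * ((ℓ:ℝ) * x^(ℓ-1))) x := (hasDerivAt_pow ℓ x).const_mul _
    have h2 : HasDerivAt (fun y : ℝ => (1-y)^(2*k+1-ℓ))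
        (-(((2*k+1-ℓ : ℕ):ℝ) * (1-x)^(2*k+1-ℓ-1))) x := by
      have h3 := (hasDerivAt_pow (2*k+1-ℓ) (1-x)).comp x
        (((hasDerivAt_id x).const_sub 1))
      simpa [Function.comp_def] using h3
    have := h1.mul h2
    refine this.congr_deriv ?_
    rw [show 2*k+1-ℓ-1 = 2*k-ℓ by omega]
    ring
  have h := HasDerivAt.fun_sum hterm
  rwa [sum_deriv] at h

lemma G_half (k : ℕ) :
    ∑ ℓ ∈ Icc (k+1) (2*k+1), (Nat.choose (2*k+1) ℓ : ℝ) * (1/2:ℝ)^ℓ * (1-(1/2:ℝ))^(2*k+1-ℓ)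
      = 1/2 := by
  have hs : ∀ ℓ ∈ Icc (k+1) (2*k+1),
      (Nat.choose (2*k+1) ℓ : ℝ) * (1/2:ℝ)^ℓ * (1-(1/2:ℝ))^(2*k+1-ℓ)
        = (Nat.choose (2*k+1) ℓ : ℝ) * (1/2:ℝ)^(2*k+1) := by
    intro ℓ hℓ
    simp only [mem_Icc] at hℓ
    rw [show (1:ℝ)-1/2 = 1/2 by norm_num, mul_assoc, ← pow_add,
      show ℓ + (2*k+1-ℓ) = 2*k+1 by omega]
  rw [Finset.sum_congr rfl hs, ← Finset.sum_mul]
  have hnat : ∑ ℓ ∈ Icc (k+1) (2*k+1), Nat.choose (2*k+1) ℓ = 4^k := by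
    have hsplit := Finset.sum_Ico_consecutive (fun ℓ => Nat.choose (2*k+1) ℓ)
      (by omega : 0 ≤ k+1) (by omega : k+1 ≤ 2*k+2)
    have h1 : ∑ ℓ ∈ Finset.Ico 0 (k+1), Nat.choose (2*k+1) ℓ = 4^k := by
      rw [(Finset.range_eq_Ico _).symm]; exact Nat.sum_range_choose_halfway k
    have h2 : ∑ ℓ ∈ Finset.Ico 0 (2*k+2), Nat.choose (2*k+1) ℓ = 2^(2*k+1) := by
      rw [(Finset.range_eq_Ico _).symm]; exact Nat.sum_range_choose (2*k+1)
    have h3 : Finset.Icc (k+1) (2*k+1) = Finset.Ico (k+1) (2*k+2) := by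
      exact (Finset.Ico_add_one_right_eq_Icc (k+1) (2*k+1)).symm
    rw [h3]
    beta_reduce at hsplit
    rw [h1, h2] at hsplit
    have h4 : (2:ℕ)^(2*k+1) = 2 * 4^k := by rw [pow_succ']; congr 1; rw [pow_mul]; norm_num
    omega
  have : ((∑ ℓ ∈ Icc (k+1) (2*k+1), Nat.choose (2*k+1) ℓ : ℕ) : ℝ) = (4:ℝ)^k := by
    rw [hnat]; push_cast; ring
  push_cast at this
  rw [this]
  rw [show (1/2:ℝ)^(2*k+1) = (1/2:ℝ)^(2*k) * (1/2) from pow_succ _ _,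
    show ((1:ℝ)/2)^(2*k) = ((1/4:ℝ))^k by rw [pow_mul]; norm_num]
  rw [show (4:ℝ)^k * ((1/4:ℝ)^k * (1/2)) = (4 * (1/4):ℝ)^k * (1/2) by rw [mul_pow]; ring]
  norm_num

theorem binomial_majority_bounds (t : ℕ) (ht : 4 ≤ t) (hodd : Odd t)
    (δ : ℝ) (hδ0 : 0 ≤ δ) (hδ : δ ≤ 1 / (2 * Real.sqrt ((t : ℝ) - 1))) :
    1 / 2 + (1 / 3) * Real.sqrt t * δ
      ≤ ∑ ℓ ∈ Finset.Icc ((t + 1) / 2) t,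
          (Nat.choose t ℓ : ℝ) * (1 / 2 + δ) ^ ℓ * (1 - (1 / 2 + δ)) ^ (t - ℓ) ∧
    ∑ ℓ ∈ Finset.Icc ((t + 1) / 2) t,
        (Nat.choose t ℓ : ℝ) * (1 / 2 + δ) ^ ℓ * (1 - (1 / 2 + δ)) ^ (t - ℓ)
      ≤ 1 / 2 + Real.sqrt t * δ := by
  obtain ⟨k, hk⟩ := hodd
  subst hk
  have hk2 : 2 ≤ k := by omega
  have hm : (2*k+1+1)/2 = k+1 := by omega
  rw [hm]
  set p : ℝ := 1/2 + δ with hp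
  set c : ℝ := (2*(k:ℝ)+1) * (Nat.choose (2*k) k : ℝ) with hcdef
  have hCpos : (0:ℝ) < (Nat.choose (2*k) k : ℝ) := by
    exact_mod_cast Nat.choose_pos (by omega : k ≤ 2*k)
  have hcpos : 0 < c := by positivity
  have hkR : (0:ℝ) < (k:ℝ) := by exact_mod_cast (by omega : 0 < k)
  have hk2R : (2:ℝ) ≤ (k:ℝ) := by exact_mod_cast hk2
  -- δ bound facts
  have htr : ((2*k+1 : ℕ):ℝ) - 1 = 2*(k:ℝ) := by push_cast; ring
  have hsq2k : Real.sqrt (2*(k:ℝ)) ^ 2 = 2*(k:ℝ) := Real.sq_sqrt (by positivity)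
  have hsqpos : 0 < Real.sqrt (2*(k:ℝ)) := Real.sqrt_pos.mpr (by positivity)
  have hδ' : δ ≤ 1 / (2 * Real.sqrt (2*(k:ℝ))) := by rwa [htr] at hδ
  have hδsq : δ^2 ≤ 1/(8*(k:ℝ)) := by
    have h1 : δ^2 ≤ (1 / (2 * Real.sqrt (2*(k:ℝ))))^2 := by
      apply pow_le_pow_left₀ hδ0 hδ'
    calc δ^2 ≤ (1 / (2 * Real.sqrt (2*(k:ℝ))))^2 := h1
      _ = 1/(4 * (Real.sqrt (2*(k:ℝ))^2)) := by ring
      _ = 1/(8*(k:ℝ)) := by rw [hsq2k]; ring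
  have hδ14 : δ ≤ 1/4 := by
    have h2 : (2:ℝ) ≤ Real.sqrt (2*(k:ℝ)) := by
      rw [Real.le_sqrt (by norm_num) (by positivity)]
      norm_num
      linarith [hk2R]
    calc δ ≤ 1 / (2 * Real.sqrt (2*(k:ℝ))) := hδ'
      _ ≤ 1/4 := by
          rw [div_le_div_iff₀ (by positivity) (by norm_num)]
          nlinarith [h2]
  have hδsq14 : δ^2 ≤ 1/16 := by nlinarith [hδ14, hδ0]
  -- FTC
  have hcont : Continuous (fun y : ℝ => c * (y^k*(1-y)^k)) := by fun_prop
  have hftc : ∫ y in (1/2:ℝ)..p, c * (y^k*(1-y)^k)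
      = (∑ ℓ ∈ Icc (k+1) (2*k+1), (Nat.choose (2*k+1) ℓ : ℝ) * p^ℓ * (1-p)^(2*k+1-ℓ))
        - (∑ ℓ ∈ Icc (k+1) (2*k+1), (Nat.choose (2*k+1) ℓ : ℝ) * (1/2:ℝ)^ℓ * (1-(1/2:ℝ))^(2*k+1-ℓ)) := by
    exact intervalIntegral.integral_eq_sub_of_hasDerivAt
      (fun x _ => G_hasDeriv k x) (hcont.intervalIntegrable _ _)
  rw [G_half k] at hftc
  have hhp : (1/2:ℝ) ≤ p := by rw [hp]; linarith
  -- pointwise bounds on [1/2, p]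
  have hub : ∀ y ∈ Set.Icc (1/2:ℝ) p, c * (y^k*(1-y)^k) ≤ c * (1/4:ℝ)^k := by
    intro y hy
    obtain ⟨hy1, hy2⟩ := hy
    have hyle : y ≤ 3/4 := by rw [hp] at hy2; linarith [hδ14]
    have h0 : 0 ≤ y*(1-y) := by nlinarith
    have h1 : y*(1-y) ≤ 1/4 := by nlinarith [sq_nonneg (y - 1/2)]
    have := pow_le_pow_left₀ h0 h1 k
    rw [mul_pow] at this
    exact mul_le_mul_of_nonneg_left this hcpos.le
  have hlb : ∀ y ∈ Set.Icc (1/2:ℝ) p, c * (1/4 - δ^2)^k ≤ c * (y^k*(1-y)^k) := by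
    intro y hy
    obtain ⟨hy1, hy2⟩ := hy
    have h2 : y - 1/2 ≤ δ := by rw [hp] at hy2; linarith
    have h3 : 0 ≤ y - 1/2 := by linarith
    have h4 : (y-1/2)^2 ≤ δ^2 := by nlinarith
    have h5 : 1/4 - δ^2 ≤ y*(1-y) := by nlinarith
    have h6 : (0:ℝ) ≤ 1/4 - δ^2 := by linarith [hδsq14]
    have := pow_le_pow_left₀ h6 h5 k
    rw [mul_pow] at this
    exact mul_le_mul_of_nonneg_left this hcpos.le
  -- integral bounds
  have hIint : IntervalIntegrable (fun y : ℝ => c * (y^k*(1-y)^k)) MeasureTheory.volume (1/2) p :=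
    hcont.intervalIntegrable _ _
  have hIub : ∫ y in (1/2:ℝ)..p, c * (y^k*(1-y)^k) ≤ δ * (c * (1/4:ℝ)^k) := by
    have := intervalIntegral.integral_mono_on hhp hIint (intervalIntegrable_const) hub
    rwa [intervalIntegral.integral_const, smul_eq_mul, show p - 1/2 = δ by rw [hp]; ring] at this
  have hIlb : δ * (c * (1/4 - δ^2)^k) ≤ ∫ y in (1/2:ℝ)..p, c * (y^k*(1-y)^k) := by
    have := intervalIntegral.integral_mono_on hhp (intervalIntegrable_const) hIint hlb
    rwa [intervalIntegral.integral_const, smul_eq_mul, show p - 1/2 = δ by rw [hp]; ring] at this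
  -- numeric: c * (1/4)^k ≤ √t
  have h16 : (0:ℝ) < (16:ℝ)^k := by positivity
  have hinv16 : ((1:ℝ)/16)^k * 16^k = 1 := by rw [← mul_pow]; norm_num
  have hcb : (Nat.centralBinom k : ℝ) = (Nat.choose (2*k) k : ℝ) := by
    simp [Nat.centralBinom]
  have hquarter : (((1:ℝ)/4)^k)^2 = ((1:ℝ)/16)^k := by
    rw [← pow_mul, show k*2 = 2*k by ring, pow_mul]; norm_num
  have hcu : c * (1/4:ℝ)^k ≤ Real.sqrt ((2*k+1:ℕ):ℝ) := by
    rw [Real.le_sqrt (by positivity) (by positivity)]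
    push_cast
    have hu := cb_upper k
    rw [hcb] at hu
    have key : (c * (1/4:ℝ)^k)^2 = c^2 * (1/16)^k := by
      rw [mul_pow, hquarter]
    rw [key]
    have h1 : c^2 ≤ (2*(k:ℝ)+1) * 16^k := by
      rw [hcdef]
      have h2 : (2*(k:ℝ)+1)^2 * (Nat.choose (2*k) k : ℝ)^2 ≤ (2*(k:ℝ)+1) * ((3*(k:ℝ)+1) * (Nat.choose (2*k) k : ℝ)^2) := by
        nlinarith [mul_nonneg (mul_nonneg (by positivity : (0:ℝ) ≤ 2*(k:ℝ)+1) hkR.le) (sq_nonneg ((Nat.choose (2*k) k : ℝ)))]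
      calc ((2*(k:ℝ)+1) * (Nat.choose (2*k) k : ℝ))^2
          = (2*(k:ℝ)+1)^2 * (Nat.choose (2*k) k : ℝ)^2 := by ring
        _ ≤ (2*(k:ℝ)+1) * ((3*(k:ℝ)+1) * (Nat.choose (2*k) k : ℝ)^2) := h2
        _ ≤ (2*(k:ℝ)+1) * 16^k := mul_le_mul_of_nonneg_left hu (by positivity)
    calc c^2 * (1/16:ℝ)^k ≤ ((2*(k:ℝ)+1) * 16^k) * (1/16)^k :=
          mul_le_mul_of_nonneg_right h1 (by positivity)
      _ = (2*(k:ℝ)+1) * (((1:ℝ)/16)^k * 16^k) := by ring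
      _ = 2*(k:ℝ)+1 := by rw [hinv16]; try ring
  -- numeric: √t ≤ (3/2) * c * (1/4)^k
  have hcl : Real.sqrt ((2*k+1:ℕ):ℝ) ≤ (3/2) * (c * (1/4:ℝ)^k) := by
    have hl := cb_lower k (by omega)
    rw [hcb] at hl
    have hgoal2 : ((2*k+1:ℕ):ℝ) ≤ ((3/2) * (c * (1/4:ℝ)^k))^2 := by
      push_cast
      have key : ((3/2) * (c * (1/4:ℝ)^k))^2 = (9/4) * c^2 * (1/16)^k := by
        rw [mul_pow, mul_pow, hquarter]; ring
      rw [key]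
      have h1 : (2*(k:ℝ)+1) * 16^k ≤ (9/4) * c^2 := by
        rw [hcdef]
        have h2 : (2*(k:ℝ)+1) * 16^k ≤ (2*(k:ℝ)+1) * (4*(k:ℝ) * (Nat.choose (2*k) k : ℝ)^2) :=
          mul_le_mul_of_nonneg_left hl (by positivity)
        refine h2.trans ?_
        nlinarith [sq_nonneg ((Nat.choose (2*k) k : ℝ)), hkR.le,
          mul_nonneg hkR.le (sq_nonneg ((Nat.choose (2*k) k : ℝ))),
          mul_nonneg (mul_nonneg hkR.le hkR.le) (sq_nonneg ((Nat.choose (2*k) k : ℝ)))]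
      calc (2*(k:ℝ)+1) = ((2*(k:ℝ)+1) * 16^k) * (1/16)^k := by
            rw [show ((2*(k:ℝ)+1) * 16^k) * (1/16)^k = (2*(k:ℝ)+1) * (((1:ℝ)/16)^k * 16^k) by ring, hinv16]; try ring
        _ ≤ ((9/4) * c^2) * (1/16)^k :=
            mul_le_mul_of_nonneg_right h1 (by positivity)
        _ = (9/4) * c^2 * (1/16)^k := by ring
    have hs := Real.sqrt_le_sqrt hgoal2
    rwa [Real.sqrt_sq (by positivity)] at hs
  -- Bernoulli: (1/4 - δ^2)^k ≥ (1/2) * (1/4)^k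
  have hbern : (1/2:ℝ) * (1/4:ℝ)^k ≤ (1/4 - δ^2)^k := by
    have hstep : (1/4:ℝ) - 1/(8*(k:ℝ)) ≤ 1/4 - δ^2 := by linarith [hδsq]
    have h0 : (0:ℝ) ≤ 1/4 - 1/(8*(k:ℝ)) := by
      rw [sub_nonneg, div_le_div_iff₀ (by positivity) (by norm_num)]
      norm_num
      linarith [hk2R]
    have hmono := pow_le_pow_left₀ h0 hstep k
    have hfact : ((1/4:ℝ) - 1/(8*(k:ℝ)))^k = (1/4)^k * (1 - 1/(2*(k:ℝ)))^k := by
      rw [← mul_pow]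
      congr 1
      field_simp
      ring
    have hber : (1/2:ℝ) ≤ (1 - 1/(2*(k:ℝ)))^k := by
      have hha : (-2:ℝ) ≤ -(1/(2*(k:ℝ))) := by
        have : (0:ℝ) < 2*(k:ℝ) := by linarith
        have h9 : 1/(2*(k:ℝ)) ≤ 1 := by rw [div_le_one this]; linarith
        linarith
      have h1 := one_add_mul_le_pow (a := -(1/(2*(k:ℝ)))) hha k
      have h2 : 1 + (k:ℝ) * -(1/(2*(k:ℝ))) = 1/2 := by field_simp; ring
      have e : (1:ℝ) + -(1/(2*(k:ℝ))) = 1 - 1/(2*(k:ℝ)) := by ring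
      rw [h2, e] at h1
      exact h1
    calc (1/2:ℝ) * (1/4:ℝ)^k ≤ (1 - 1/(2*(k:ℝ)))^k * (1/4)^k :=
          mul_le_mul_of_nonneg_right hber (by positivity)
      _ = ((1/4:ℝ) - 1/(8*(k:ℝ)))^k := by rw [hfact]; ring
      _ ≤ (1/4 - δ^2)^k := hmono
  -- combine
  constructor
  · have hchain : (1/3) * Real.sqrt ((2*k+1:ℕ):ℝ) * δ ≤ δ * (c * (1/4 - δ^2)^k) := by
      have h1 : Real.sqrt ((2*k+1:ℕ):ℝ) ≤ 3 * (c * (1/4 - δ^2)^k) := by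
        calc Real.sqrt ((2*k+1:ℕ):ℝ) ≤ (3/2) * (c * (1/4:ℝ)^k) := hcl
          _ ≤ 3 * (c * (1/4 - δ^2)^k) := by nlinarith [hbern, hcpos]
      nlinarith [mul_le_mul_of_nonneg_left h1 hδ0]
    linarith [hIlb, hftc.symm.le, hftc.le, hchain]
  · have hchain : δ * (c * (1/4:ℝ)^k) ≤ Real.sqrt ((2*k+1:ℕ):ℝ) * δ := by
      nlinarith [mul_le_mul_of_nonneg_left hcu hδ0]
    linarith [hIub, hftc.le, hftc.symm.le, hchain]
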